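/- In the satellite conjunction model, as σ → ∞ with fixed true θ₀, the point mass M(D) = 1 - Γ₂(D²/σ²; 0) converges in distribution to Uniform[0,1]; in particular, its expectation converges to 1/2, preventing dilution of confidence at {0}. -/

import Mathlib

open Set Filter Topology MeasureTheory

/-- CDF of the noncentral chi-square distribution with 2 degrees of freedom and
noncentrality `ν`, evaluated at `x`. -/
noncomputable def Gamma2 (x ν : ℝ) : ℝ :=
  ∑' k : ℕ, Real.exp (-ν / 2) * (ν / 2) ^ k / (Nat.factorial k : ℝ) *
    (1 - Real.exp (-x / 2) *
      ∑ j ∈ Finset.range (k + 1), (x / 2) ^ j / (Nat.factorial j : ℝ))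

noncomputable def g2term (x ν : ℝ) (k : ℕ) : ℝ :=
  Real.exp (-ν / 2) * (ν / 2) ^ k / (Nat.factorial k : ℝ) *
    (1 - Real.exp (-x / 2) *
      ∑ j ∈ Finset.range (k + 1), (x / 2) ^ j / (Nat.factorial j : ℝ))

lemma g2term_def (x ν : ℝ) (k : ℕ) : g2term x ν k =
    Real.exp (-ν / 2) * (ν / 2) ^ k / (Nat.factorial k : ℝ) *
    (1 - Real.exp (-x / 2) *
      ∑ j ∈ Finset.range (k + 1), (x / 2) ^ j / (Nat.factorial j : ℝ)) := rfl

lemma Gamma2_eq (x ν : ℝ) : Gamma2 x ν = ∑' k, g2term x ν k := rfl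

lemma exp_tsum (a : ℝ) : ∑' k : ℕ, a ^ k / (Nat.factorial k : ℝ) = Real.exp a := by
  rw [Real.exp_eq_exp_ℝ, NormedSpace.exp_eq_tsum_div]

lemma c_abs_le (x : ℝ) (k : ℕ) :
    |1 - Real.exp (-x / 2) * ∑ j ∈ Finset.range (k + 1), (x / 2) ^ j / (Nat.factorial j : ℝ)|
      ≤ 1 + Real.exp (-x / 2) * Real.exp (|x| / 2) := by
  have h1 : |∑ j ∈ Finset.range (k + 1), (x / 2) ^ j / (Nat.factorial j : ℝ)|
      ≤ Real.exp (|x| / 2) := by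
    calc |∑ j ∈ Finset.range (k + 1), (x / 2) ^ j / (Nat.factorial j : ℝ)|
        ≤ ∑ j ∈ Finset.range (k + 1), |(x / 2) ^ j / (Nat.factorial j : ℝ)| :=
          Finset.abs_sum_le_sum_abs _ _
      _ = ∑ j ∈ Finset.range (k + 1), (|x| / 2) ^ j / (Nat.factorial j : ℝ) := by
          refine Finset.sum_congr rfl fun j _ => ?_
          simp [abs_div, abs_pow, abs_two, Nat.abs_cast]
      _ ≤ Real.exp (|x| / 2) := Real.sum_le_exp_of_nonneg (by positivity) _
  calc |1 - Real.exp (-x / 2) * ∑ j ∈ Finset.range (k + 1), (x / 2) ^ j / (Nat.factorial j : ℝ)|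
      ≤ |1| + |Real.exp (-x / 2) * ∑ j ∈ Finset.range (k + 1), (x / 2) ^ j / (Nat.factorial j : ℝ)| :=
        abs_sub _ _
    _ ≤ 1 + Real.exp (-x / 2) * Real.exp (|x| / 2) := by
        rw [abs_one, abs_mul, Real.abs_exp]
        have := mul_le_mul_of_nonneg_left h1 (Real.exp_pos (-x / 2)).le
        linarith

lemma g2term_summable (x : ℝ) {ν : ℝ} (hν : 0 ≤ ν) : Summable (g2term x ν) := by
  have hb : Summable (fun k : ℕ =>
      Real.exp (-ν / 2) * (1 + Real.exp (-x / 2) * Real.exp (|x| / 2)) *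
        ((ν / 2) ^ k / (Nat.factorial k : ℝ))) :=
    (Real.summable_pow_div_factorial (ν / 2)).mul_left _
  refine Summable.of_norm_bounded hb fun k => ?_
  rw [g2term_def, Real.norm_eq_abs, abs_mul]
  have h1 : |Real.exp (-ν / 2) * (ν / 2) ^ k / (Nat.factorial k : ℝ)|
      = Real.exp (-ν / 2) * ((ν / 2) ^ k / (Nat.factorial k : ℝ)) := by
    rw [abs_of_nonneg (by positivity), mul_div_assoc]
  rw [h1]
  calc Real.exp (-ν / 2) * ((ν / 2) ^ k / (Nat.factorial k : ℝ)) *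
        |1 - Real.exp (-x / 2) * ∑ j ∈ Finset.range (k + 1), (x / 2) ^ j / (Nat.factorial j : ℝ)|
      ≤ Real.exp (-ν / 2) * ((ν / 2) ^ k / (Nat.factorial k : ℝ)) *
        (1 + Real.exp (-x / 2) * Real.exp (|x| / 2)) :=
        mul_le_mul_of_nonneg_left (c_abs_le x k) (by positivity)
    _ = _ := by ring

lemma c_mem (x : ℝ) (hx : 0 ≤ x) (k : ℕ) :
    (1 - Real.exp (-x / 2) * ∑ j ∈ Finset.range (k + 1), (x / 2) ^ j / (Nat.factorial j : ℝ))
      ∈ Icc (0 : ℝ) 1 := by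
  have h := Real.sum_le_exp_of_nonneg (by positivity : (0:ℝ) ≤ x / 2) (k + 1)
  have hS0 : 0 ≤ ∑ j ∈ Finset.range (k + 1), (x / 2) ^ j / (Nat.factorial j : ℝ) :=
    Finset.sum_nonneg fun j _ => by positivity
  have hmul := mul_le_mul_of_nonneg_left h (Real.exp_pos (-x / 2)).le
  have hone : Real.exp (-x / 2) * Real.exp (x / 2) = 1 := by
    rw [← Real.exp_add]
    have : -x / 2 + x / 2 = 0 := by ring
    rw [this, Real.exp_zero]
  have hEpos := (Real.exp_pos (-x / 2)).le
  constructor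
  · nlinarith
  · nlinarith

/-- Key estimate: the noncentral CDF is within `ν` of the central CDF `1 - e^{-x/2}`. -/
lemma gamma2_close (x : ℝ) {ν : ℝ} (hx : 0 ≤ x) (hν : 0 ≤ ν) :
    |Gamma2 x ν - (1 - Real.exp (-x / 2))| ≤ ν := by
  set a := ν / 2 with ha
  have hann : 0 ≤ a := by positivity
  have hs := g2term_summable x hν
  have hsplit := Summable.tsum_eq_zero_add hs
  have hf0 : g2term x ν 0 = Real.exp (-a) * (1 - Real.exp (-x / 2)) := by
    simp [g2term_def, ha, Finset.sum_range_one, neg_div]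
  set T := ∑' k : ℕ, g2term x ν (k + 1) with hT
  have hc := c_mem x hx
  have hterm_nonneg : ∀ k, 0 ≤ g2term x ν k := fun k =>
    mul_nonneg (by positivity) (hc k).1
  have hTnonneg : 0 ≤ T := tsum_nonneg fun k => hterm_nonneg _
  have hbsum : Summable (fun k : ℕ => Real.exp (-a) * a * (a ^ k / (Nat.factorial k : ℝ))) :=
    (Real.summable_pow_div_factorial a).mul_left _
  have hTle : T ≤ a := by
    have hle : ∀ k : ℕ, g2term x ν (k + 1) ≤ Real.exp (-a) * a * (a ^ k / (Nat.factorial k : ℝ)) := by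
      intro k
      have h2 : g2term x ν (k + 1) ≤ Real.exp (-a) * (a ^ (k + 1) / (Nat.factorial (k + 1) : ℝ)) := by
        have h3 : (0:ℝ) ≤ Real.exp (-ν / 2) * (ν / 2) ^ (k+1) / (Nat.factorial (k+1) : ℝ) := by
          positivity
        calc g2term x ν (k + 1)
            ≤ Real.exp (-ν / 2) * (ν / 2) ^ (k+1) / (Nat.factorial (k+1) : ℝ) * 1 :=
              mul_le_mul_of_nonneg_left (hc (k+1)).2 h3
          _ = Real.exp (-a) * (a ^ (k + 1) / (Nat.factorial (k + 1) : ℝ)) := by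
              rw [mul_one, ha, neg_div, mul_div_assoc]
      refine h2.trans ?_
      have h4 : a ^ (k + 1) / (Nat.factorial (k + 1) : ℝ) ≤ a * (a ^ k / (Nat.factorial k : ℝ)) := by
        rw [pow_succ, mul_comm (a ^ k) a, mul_div_assoc]
        gcongr
        exact Nat.le_succ k
      calc Real.exp (-a) * (a ^ (k + 1) / (Nat.factorial (k + 1) : ℝ))
          ≤ Real.exp (-a) * (a * (a ^ k / (Nat.factorial k : ℝ))) :=
            mul_le_mul_of_nonneg_left h4 (Real.exp_pos _).le
        _ = Real.exp (-a) * a * (a ^ k / (Nat.factorial k : ℝ)) := by ring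
    calc T ≤ ∑' k : ℕ, Real.exp (-a) * a * (a ^ k / (Nat.factorial k : ℝ)) :=
          Summable.tsum_le_tsum hle ((summable_nat_add_iff 1).mpr hs) hbsum
      _ = Real.exp (-a) * a * Real.exp a := by rw [tsum_mul_left, exp_tsum]
      _ = a := by
          rw [mul_comm (Real.exp (-a)) a, mul_assoc, ← Real.exp_add]
          simp
  have hE : Real.exp (-x / 2) ≤ 1 := by
    rw [Real.exp_le_one_iff]
    linarith [div_nonneg hx (by norm_num : (0:ℝ) ≤ 2), neg_div 2 x]
  have hEpos : 0 < Real.exp (-x / 2) := Real.exp_pos _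
  have hexpa : 1 - Real.exp (-a) ≤ a := by
    have := Real.add_one_le_exp (-a)
    linarith
  have hexpa' : Real.exp (-a) ≤ 1 := Real.exp_le_one_iff.mpr (by linarith)
  have key : Gamma2 x ν - (1 - Real.exp (-x / 2))
      = (Real.exp (-a) - 1) * (1 - Real.exp (-x / 2)) + T := by
    rw [Gamma2_eq, hsplit, hf0]; ring
  have habs1 : |(Real.exp (-a) - 1) * (1 - Real.exp (-x / 2))| ≤ a := by
    rw [abs_mul]
    have e1 : |Real.exp (-a) - 1| ≤ a := by
      rw [abs_sub_comm, abs_of_nonneg (by linarith)]; linarith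
    have e2 : |1 - Real.exp (-x / 2)| ≤ 1 := by
      rw [abs_of_nonneg (by linarith)]; linarith
    calc |Real.exp (-a) - 1| * |1 - Real.exp (-x / 2)| ≤ a * 1 :=
        mul_le_mul e1 e2 (abs_nonneg _) hann
      _ = a := mul_one a
  rw [key]
  calc |(Real.exp (-a) - 1) * (1 - Real.exp (-x / 2)) + T|
      ≤ |(Real.exp (-a) - 1) * (1 - Real.exp (-x / 2))| + |T| := abs_add_le _ _
    _ ≤ a + a := add_le_add habs1 (by rw [abs_of_nonneg hTnonneg]; exact hTle)
    _ = ν := by rw [ha]; ring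

lemma gamma2_mem (x : ℝ) {ν : ℝ} (hx : 0 ≤ x) (hν : 0 ≤ ν) :
    Gamma2 x ν ∈ Icc (0 : ℝ) 1 := by
  have hs := g2term_summable x hν
  have hc := c_mem x hx
  constructor
  · exact tsum_nonneg fun k => mul_nonneg (by positivity) (hc k).1
  · have hb : Summable (fun k : ℕ => Real.exp (-ν/2) * ((ν / 2) ^ k / (Nat.factorial k : ℝ))) :=
      (Real.summable_pow_div_factorial (ν / 2)).mul_left _
    calc Gamma2 x ν ≤ ∑' k : ℕ, Real.exp (-ν/2) * ((ν / 2) ^ k / (Nat.factorial k : ℝ)) := by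
          refine Summable.tsum_le_tsum (fun k => ?_) hs hb
          calc Real.exp (-ν / 2) * (ν / 2) ^ k / (Nat.factorial k : ℝ) *
              (1 - Real.exp (-x / 2) * ∑ j ∈ Finset.range (k + 1), (x / 2) ^ j / (Nat.factorial j : ℝ))
              ≤ Real.exp (-ν / 2) * (ν / 2) ^ k / (Nat.factorial k : ℝ) * 1 :=
                mul_le_mul_of_nonneg_left (hc k).2 (by positivity)
            _ = Real.exp (-ν/2) * ((ν / 2) ^ k / (Nat.factorial k : ℝ)) := by
                rw [mul_one, mul_div_assoc]
      _ = Real.exp (-ν/2) * Real.exp (ν/2) := by rw [tsum_mul_left, exp_tsum]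
      _ = 1 := by
          rw [← Real.exp_add]
          have : -ν / 2 + ν / 2 = 0 := by ring
          rw [this, Real.exp_zero]

lemma gamma2_log_measurable {ν : ℝ} (hν : 0 ≤ ν) :
    Measurable (fun t : ℝ => Gamma2 (-2 * Real.log t) ν) := by
  have hlog : Measurable fun t : ℝ => -2 * Real.log t := Real.measurable_log.const_mul (-2)
  have hmeas : ∀ n : ℕ, Measurable (fun t : ℝ =>
      ∑ k ∈ Finset.range n, g2term (-2 * Real.log t) ν k) := by
    intro n
    apply Finset.measurable_sum
    intro k _
    simp only [g2term_def]
    have h1 : Measurable fun t : ℝ => Real.exp (-(-2 * Real.log t) / 2) :=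
      Real.measurable_exp.comp (hlog.neg.div_const 2)
    have h2 : Measurable fun t : ℝ => ∑ j ∈ Finset.range (k + 1),
        ((-2 * Real.log t) / 2) ^ j / (Nat.factorial j : ℝ) :=
      Finset.measurable_sum _ fun j _ => ((hlog.div_const 2).pow_const j).div_const _
    exact (measurable_const.sub (h1.mul h2)).const_mul _
  apply measurable_of_tendsto_metrizable hmeas
  rw [tendsto_pi_nhds]
  intro t
  exact ((g2term_summable (-2 * Real.log t) hν).hasSum).tendsto_sum_nat

lemma integral_one_sub : ∫ t in Ioo (0 : ℝ) 1, (1 - t) = 1 / 2 := by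
  rw [← integral_Ioc_eq_integral_Ioo, ← intervalIntegral.integral_of_le zero_le_one]
  have : (∫ t in (0:ℝ)..1, (1 - t)) = (∫ _ in (0:ℝ)..1, (1:ℝ)) - ∫ t in (0:ℝ)..1, t := by
    apply intervalIntegral.integral_sub intervalIntegrable_const
    exact intervalIntegral.intervalIntegrable_id
  rw [this, intervalIntegral.integral_const, integral_id]
  norm_num

lemma nu_tendsto (θ₀ : ℝ) :
    Tendsto (fun σ : ℝ => θ₀ ^ 2 / σ ^ 2) atTop (𝓝 0) :=
  Tendsto.div_atTop tendsto_const_nhds (tendsto_pow_atTop two_ne_zero)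

theorem point_mass_tendsto_uniform (θ₀ : ℝ) :
    (∀ t ∈ Ioo (0 : ℝ) 1,
      Tendsto (fun σ : ℝ => 1 - Gamma2 (-2 * Real.log t) (θ₀ ^ 2 / σ ^ 2))
        atTop (𝓝 t)) ∧
    Tendsto
      (fun σ : ℝ => ∫ t in Ioo (0 : ℝ) 1, Gamma2 (-2 * Real.log t) (θ₀ ^ 2 / σ ^ 2))
      atTop (𝓝 (1 / 2)) := by
  have hν : ∀ σ : ℝ, 0 ≤ θ₀ ^ 2 / σ ^ 2 := fun σ => by positivity
  have hx : ∀ t ∈ Ioo (0:ℝ) 1, 0 ≤ -2 * Real.log t := by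
    intro t ht
    have := Real.log_nonpos ht.1.le ht.2.le
    linarith
  have hexp : ∀ t ∈ Ioo (0:ℝ) 1, Real.exp (-(-2 * Real.log t) / 2) = t := by
    intro t ht
    have : -(-2 * Real.log t) / 2 = Real.log t := by ring
    rw [this, Real.exp_log ht.1]
  have hclose : ∀ σ : ℝ, ∀ t ∈ Ioo (0:ℝ) 1,
      |Gamma2 (-2 * Real.log t) (θ₀ ^ 2 / σ ^ 2) - (1 - t)| ≤ θ₀ ^ 2 / σ ^ 2 := by
    intro σ t ht
    have := gamma2_close (-2 * Real.log t) (hx t ht) (hν σ)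
    rwa [hexp t ht] at this
  constructor
  · intro t ht
    rw [tendsto_iff_dist_tendsto_zero]
    apply squeeze_zero (fun σ => dist_nonneg) (g := fun σ => θ₀ ^ 2 / σ ^ 2) _ (nu_tendsto θ₀)
    intro σ
    rw [Real.dist_eq]
    have := hclose σ t ht
    rw [show (1 - Gamma2 (-2 * Real.log t) (θ₀ ^ 2 / σ ^ 2)) - t
        = -(Gamma2 (-2 * Real.log t) (θ₀ ^ 2 / σ ^ 2) - (1 - t)) by ring, abs_neg]
    exact this
  · rw [tendsto_iff_dist_tendsto_zero]
    apply squeeze_zero (fun σ => dist_nonneg) (g := fun σ => θ₀ ^ 2 / σ ^ 2) _ (nu_tendsto θ₀)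
    intro σ
    set ν := θ₀ ^ 2 / σ ^ 2 with hνdef
    have hmeas := gamma2_log_measurable (hν σ)
    have hint : IntegrableOn (fun t : ℝ => Gamma2 (-2 * Real.log t) ν) (Ioo 0 1) := by
      refine Integrable.mono' (integrable_const 1) hmeas.aestronglyMeasurable ?_
      rw [ae_restrict_iff' measurableSet_Ioo]
      refine ae_of_all _ fun t ht => ?_
      have := gamma2_mem (-2 * Real.log t) (hx t ht) (hν σ)
      rw [Real.norm_eq_abs, abs_le]
      exact ⟨by linarith [this.1], this.2⟩
    have hint2 : IntegrableOn (fun t : ℝ => (1 : ℝ) - t) (Ioo 0 1) := by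
      apply Integrable.sub (integrable_const 1)
      exact (intervalIntegrable_iff_integrableOn_Ioo_of_le zero_le_one).mp
        intervalIntegral.intervalIntegrable_id
    rw [Real.dist_eq]
    have hsub : (∫ t in Ioo (0:ℝ) 1, Gamma2 (-2 * Real.log t) ν) - 1/2
        = ∫ t in Ioo (0:ℝ) 1, (Gamma2 (-2 * Real.log t) ν - (1 - t)) := by
      rw [integral_sub hint hint2, integral_one_sub]
    rw [hsub]
    have hb := norm_setIntegral_le_of_norm_le_const
      (μ := volume) (s := Ioo (0:ℝ) 1) (C := ν)
      (f := fun t => Gamma2 (-2 * Real.log t) ν - (1 - t))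
      (by simp) (fun t ht => by rw [Real.norm_eq_abs]; exact hclose σ t ht)
    simpa using hb
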